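/- Let V(x) = (1+x²)^ε with 0 < ε ≤ 1, and let σ: ℝ → ℝ satisfy 0 < σ_0 ≤ σ(x) ≤ σ_1. For constants M > 0, a > 0, L ≥ 1, let Σ be the class of C¹ functions S with sup_{|x|≤a}|S(x)| ≤ M, inf_{|x|≥a} S'(x) ≥ −L, and sup_{|x|≥a} S'(x) ≤ −1/L. Then there exists β > 0 (depending only on M, a, L, σ_1, ε) such that for all S ∈ Σ and all x ∈ ℝ: V'(x)S(x) + (σ²(x)/2)V''(x) ≤ −(ε/(2L))·V(x) + β. -/

import Mathlib

set_option maxHeartbeats 1000000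

lemma hasDerivAt_V (p : ℝ) (x : ℝ) :
    HasDerivAt (fun y : ℝ => (1 + y ^ 2) ^ p) (p * (1 + x ^ 2) ^ (p - 1) * (2 * x)) x := by
  have h1 : HasDerivAt (fun y : ℝ => 1 + y ^ 2) (2 * x) x := by
    simpa using (hasDerivAt_pow 2 x).const_add 1
  have h2 := (Real.hasDerivAt_rpow_const (x := 1 + x ^ 2) (p := p)
    (Or.inl (by positivity))).comp x h1
  simpa [mul_assoc, Function.comp_def] using h2

lemma deriv_V (p : ℝ) : deriv (fun y : ℝ => (1 + y ^ 2) ^ p)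
    = fun x : ℝ => p * ((1 + x ^ 2) ^ (p - 1) * (2 * x)) := by
  funext x
  rw [(hasDerivAt_V p x).deriv]; ring

lemma deriv2_V (ε : ℝ) (x : ℝ) :
    deriv (deriv (fun y : ℝ => (1 + y ^ 2) ^ ε)) x
      = ε * ((ε - 1) * (1 + x ^ 2) ^ (ε - 1 - 1) * (2 * x) * (2 * x)
          + (1 + x ^ 2) ^ (ε - 1) * 2) := by
  rw [deriv_V ε]
  have h : HasDerivAt (fun y : ℝ => ε * ((1 + y ^ 2) ^ (ε - 1) * (2 * y)))
      (ε * ((ε - 1) * (1 + x ^ 2) ^ (ε - 1 - 1) * (2 * x) * (2 * x)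
          + (1 + x ^ 2) ^ (ε - 1) * 2)) x := by
    have hm := (hasDerivAt_V (ε - 1) x).mul ((hasDerivAt_id x).const_mul 2)
    have := hm.const_mul ε
    simp only [id] at this
    exact this.congr_deriv (by ring)
  exact h.deriv

lemma S_upper (a L : ℝ) (S : ℝ → ℝ) (hS : ContDiff ℝ 1 S)
    (hd : ∀ t, a ≤ |t| → deriv S t ≤ -(1 / L)) :
    ∀ x, a ≤ x → S x + x / L ≤ S a + a / L := by
  intro x hx
  have hg : ∀ t : ℝ, HasDerivAt (fun t => S t + t / L) (deriv S t + 1 / L) t := fun t =>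
    ((hS.differentiable one_ne_zero t).hasDerivAt).add ((hasDerivAt_id t).div_const L)
  have hanti : AntitoneOn (fun t => S t + t / L) (Set.Ici a) := by
    apply antitoneOn_of_deriv_nonpos (convex_Ici a)
    · exact (hS.continuous.add (continuous_id.div_const L)).continuousOn
    · intro t _; exact ((hg t).differentiableAt).differentiableWithinAt
    · intro t ht
      rw [interior_Ici] at ht
      rw [(hg t).deriv]
      have h1 := hd t (le_trans ht.le (le_abs_self t))
      linarith
  exact hanti Set.self_mem_Ici hx hx

lemma S_lower (a L : ℝ) (ha : 0 < a) (S : ℝ → ℝ) (hS : ContDiff ℝ 1 S)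
    (hd : ∀ t, a ≤ |t| → deriv S t ≤ -(1 / L)) :
    ∀ x, x ≤ -a → S (-a) + (-a) / L ≤ S x + x / L := by
  intro x hx
  have hg : ∀ t : ℝ, HasDerivAt (fun t => S t + t / L) (deriv S t + 1 / L) t := fun t =>
    ((hS.differentiable one_ne_zero t).hasDerivAt).add ((hasDerivAt_id t).div_const L)
  have hanti : AntitoneOn (fun t => S t + t / L) (Set.Iic (-a)) := by
    apply antitoneOn_of_deriv_nonpos (convex_Iic (-a))
    · exact (hS.continuous.add (continuous_id.div_const L)).continuousOn
    · intro t _; exact ((hg t).differentiableAt).differentiableWithinAt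
    · intro t ht
      rw [interior_Iic] at ht
      rw [(hg t).deriv]
      have ht' : t < -a := Set.mem_Iio.mp ht
      have habs : a ≤ |t| := by
        rw [abs_of_neg (by linarith : t < 0)]; linarith
      have h1 := hd t habs
      linarith
  exact hanti hx Set.self_mem_Iic hx

lemma xS_bound (M a L : ℝ) (hM : 0 < M) (ha : 0 < a) (hL : 1 ≤ L)
    (S : ℝ → ℝ) (hS : ContDiff ℝ 1 S)
    (hbound : ∀ x, |x| ≤ a → |S x| ≤ M)
    (hd : ∀ t, a ≤ |t| → deriv S t ≤ -(1 / L)) :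
    ∀ x, x * S x ≤ -(x ^ 2 / L) + (M + a / L) * |x| + a * M := by
  intro x
  have hL0 : 0 < L := lt_of_lt_of_le one_pos hL
  rcases le_or_gt (|x|) a with hxa | hxa
  · -- |x| ≤ a
    have h1 : x * S x ≤ a * M := by
      calc x * S x ≤ |x * S x| := le_abs_self _
        _ = |x| * |S x| := abs_mul _ _
        _ ≤ a * M := mul_le_mul hxa (hbound x hxa) (abs_nonneg _) ha.le
    have hx2 : x ^ 2 ≤ a * |x| := by nlinarith [sq_abs x, abs_nonneg x]
    have h3 : x ^ 2 / L ≤ a * |x| / L := by gcongr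
    have h4 : a * |x| / L = a / L * |x| := by ring
    have h5 : 0 ≤ M * |x| := mul_nonneg hM.le (abs_nonneg x)
    nlinarith [h3, h4]
  · rcases le_or_gt a x with hax | hax
    · -- x ≥ a > 0
      have hSa : |S a| ≤ M := hbound a (by rw [abs_of_pos ha])
      have h0 := S_upper a L S hS hd x hax
      have ht : S x ≤ M + a / L - x / L := by
        have := (abs_le.mp hSa).2
        linarith
      have hx0 : 0 < x := lt_of_lt_of_le ha hax
      have h1 : x * S x ≤ x * (M + a / L - x / L) :=
        mul_le_mul_of_nonneg_left ht hx0.le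
      have h2 : x * (M + a / L - x / L) = -(x ^ 2 / L) + (M + a / L) * x := by ring
      rw [abs_of_pos hx0]
      nlinarith [mul_pos ha hM]
    · -- x ≤ -a
      have hxn : x ≤ -a := by
        rcases abs_cases x with ⟨h, _⟩ | ⟨h, _⟩
        · exfalso; rw [h] at hxa; linarith
        · linarith [hxa, h.symm ▸ hxa]
      have hSa : |S (-a)| ≤ M := hbound (-a) (by rw [abs_neg, abs_of_pos ha])
      have h0 := S_lower a L ha S hS hd x hxn
      have hnd : -a / L = -(a / L) := neg_div L a
      have ht : -M - a / L - x / L ≤ S x := by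
        have := (abs_le.mp hSa).1
        linarith
      have hx0 : x < 0 := by linarith
      have h1 : x * S x ≤ x * (-M - a / L - x / L) :=
        mul_le_mul_of_nonpos_left ht hx0.le
      have h2 : x * (-M - a / L - x / L) = -(x ^ 2 / L) + (M + a / L) * (-x) := by ring
      rw [abs_of_neg hx0]
      nlinarith [mul_pos ha hM]

lemma deriv_V_pt (p : ℝ) (x : ℝ) : deriv (fun y : ℝ => (1 + y ^ 2) ^ p) x
    = p * ((1 + x ^ 2) ^ (p - 1) * (2 * x)) := by rw [deriv_V]

/-- `V(x) = (1+x²)^ε` is a uniform Lyapunov function for the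
diffusion generator over the drift class `Σ_{M,a,L}`: there is `β > 0`,
depending only on `M, a, L, σ₁, ε`, with
`V'S + (σ²/2)V'' ≤ −(ε/(2L))V + β` for all `S ∈ Σ` and all `x`. -/
theorem uniform_lyapunov_for_diffusion
    (M a L ε : ℝ) (hM : 0 < M) (ha : 0 < a) (hL : 1 ≤ L)
    (hε0 : 0 < ε) (hε1 : ε ≤ 1)
    (σ : ℝ → ℝ) (σ0 σ1 : ℝ) (hσ0 : 0 < σ0)
    (hσ : ∀ x, σ0 ≤ σ x ∧ σ x ≤ σ1) :
    ∃ β : ℝ, 0 < β ∧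
      ∀ S : ℝ → ℝ, ContDiff ℝ 1 S →
        (∀ x, |x| ≤ a → |S x| ≤ M) →
        (∀ x, a ≤ |x| → -L ≤ deriv S x) →
        (∀ x, a ≤ |x| → deriv S x ≤ -(1 / L)) →
        ∀ x : ℝ,
          deriv (fun y => (1 + y ^ 2) ^ ε) x * S x
              + σ x ^ 2 / 2 * deriv (deriv fun y => (1 + y ^ 2) ^ ε) x
            ≤ -(ε / (2 * L)) * (1 + x ^ 2) ^ ε + β := by
  have hL0 : 0 < L := lt_of_lt_of_le one_pos hL
  set C : ℝ := M + a / L with hC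
  clear_value C
  have hC0 : 0 < C := by rw [hC]; positivity
  have hβ : 0 < C ^ 2 * L + 2 * a * M + 1 + σ1 ^ 2 := by
    nlinarith [mul_nonneg (sq_nonneg C) hL0.le, mul_pos ha hM, sq_nonneg σ1]
  refine ⟨C ^ 2 * L + 2 * a * M + 1 + σ1 ^ 2, hβ, ?_⟩
  intro S hS hbound _ hup x
  rw [deriv2_V ε x, deriv_V_pt ε x]
  -- notation
  set u : ℝ := 1 + x ^ 2 with hu_def
  clear_value u
  have hu1 : (1 : ℝ) ≤ u := by rw [hu_def]; nlinarith [sq_nonneg x]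
  have hu0 : (0 : ℝ) < u := by linarith
  set P : ℝ := u ^ (ε - 1) with hP_def
  set Q : ℝ := u ^ (ε - 1 - 1) with hQ_def
  clear_value P Q
  have hP0 : 0 < P := hP_def ▸ Real.rpow_pos_of_pos hu0 _
  have hP1 : P ≤ 1 := hP_def ▸ Real.rpow_le_one_of_one_le_of_nonpos hu1 (by linarith)
  have hQ0 : 0 < Q := hQ_def ▸ Real.rpow_pos_of_pos hu0 _
  have hQu : Q * u = P := by
    rw [hQ_def, hP_def, ← Real.rpow_add_one (ne_of_gt hu0)]
    norm_num
  have hPu : u ^ ε = P * u := by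
    rw [hP_def, ← Real.rpow_add_one (ne_of_gt hu0)]
    norm_num
  set s : ℝ := σ x with hs_def
  set t : ℝ := S x with ht_def
  clear_value s t
  have hs0 : 0 < s := hs_def ▸ lt_of_lt_of_le hσ0 (hσ x).1
  have hs1 : s ≤ σ1 := hs_def ▸ (hσ x).2
  have hσ1 : 0 < σ1 := lt_of_lt_of_le hs0 hs1
  have hxS : x * t ≤ -(x ^ 2 / L) + C * |x| + a * M := by
    rw [ht_def, hC]
    exact xS_bound M a L hM ha hL S hS hbound hup x
  -- term A: the (ε-1) Hessian part is nonpositive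
  have hA : s ^ 2 / 2 * (ε * ((ε - 1) * Q * (2 * x) * (2 * x))) ≤ 0 := by
    have h1 : (ε - 1) * Q * (2 * x) * (2 * x) = (ε - 1) * (Q * (2 * x) * (2 * x)) := by ring
    have h2 : 0 ≤ Q * (2 * x) * (2 * x) := by nlinarith [sq_nonneg (2*x), hQ0.le]
    have h3 : (ε - 1) * (Q * (2 * x) * (2 * x)) ≤ 0 :=
      mul_nonpos_of_nonpos_of_nonneg (by linarith) h2
    have h4 : 0 ≤ s ^ 2 / 2 * ε := by positivity
    nlinarith [mul_nonpos_of_nonneg_of_nonpos h4 (h1 ▸ h3)]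
  -- term B
  have hεP1 : ε * P ≤ 1 := by
    calc ε * P ≤ 1 * 1 := mul_le_mul hε1 hP1 hP0.le one_pos.le
      _ = 1 := one_mul 1
  have hss : s ^ 2 ≤ σ1 ^ 2 := by nlinarith
  have hB : s ^ 2 / 2 * (ε * (P * 2)) ≤ σ1 ^ 2 := by
    have he : s ^ 2 / 2 * (ε * (P * 2)) = s ^ 2 * (ε * P) := by ring
    rw [he]
    calc s ^ 2 * (ε * P) ≤ s ^ 2 * 1 := mul_le_mul_of_nonneg_left hεP1 (sq_nonneg s)
      _ = s ^ 2 := mul_one _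
      _ ≤ σ1 ^ 2 := hss
  -- key drift estimate
  have hBr : 2 * (-(x ^ 2 / L) + C * |x| + a * M) + u / (2 * L)
      ≤ C ^ 2 * L + 2 * a * M + 1 / 2 := by
    have h1 : 2 * C * |x| * L ≤ C ^ 2 * L ^ 2 + x ^ 2 := by
      nlinarith [sq_nonneg (C * L - |x|), sq_abs x]
    have h1' : 2 * C * |x| ≤ (C ^ 2 * L ^ 2 + x ^ 2) / L := by
      rw [le_div_iff₀ hL0]; linarith
    have h1'' : (C ^ 2 * L ^ 2 + x ^ 2) / L = C ^ 2 * L + x ^ 2 / L := by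
      field_simp
    have h2 : u / (2 * L) ≤ 1 / 2 + x ^ 2 / L := by
      rw [div_le_iff₀ (by positivity : (0:ℝ) < 2 * L)]
      have he : (1 / 2 + x ^ 2 / L) * (2 * L) = L + 2 * x ^ 2 := by
        field_simp
      rw [he, hu_def]
      nlinarith [sq_nonneg x]
    linarith [h1' , h1''.symm ▸ h1', h2]
  have key : ε * P * (2 * x) * t + ε / (2 * L) * (P * u)
      ≤ C ^ 2 * L + 2 * a * M + 1 / 2 := by
    have hstep1 : ε * P * (2 * x) * t + ε / (2 * L) * (P * u)
        = (ε * P) * (2 * (x * t) + u / (2 * L)) := by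
      field_simp
    have hstep2 : 2 * (x * t) + u / (2 * L)
        ≤ 2 * (-(x ^ 2 / L) + C * |x| + a * M) + u / (2 * L) := by linarith
    have hD0 : (0:ℝ) ≤ C ^ 2 * L + 2 * a * M + 1 / 2 := by positivity
    calc ε * P * (2 * x) * t + ε / (2 * L) * (P * u)
        = (ε * P) * (2 * (x * t) + u / (2 * L)) := hstep1
      _ ≤ (ε * P) * (C ^ 2 * L + 2 * a * M + 1 / 2) := by
          apply mul_le_mul_of_nonneg_left (le_trans hstep2 hBr) (by positivity)
      _ ≤ 1 * (C ^ 2 * L + 2 * a * M + 1 / 2) :=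
          mul_le_mul_of_nonneg_right hεP1 hD0
      _ = C ^ 2 * L + 2 * a * M + 1 / 2 := one_mul _
  -- assemble
  rw [hPu]
  have hexpand : s ^ 2 / 2 * (ε * ((ε - 1) * Q * (2 * x) * (2 * x) + P * 2))
      = s ^ 2 / 2 * (ε * ((ε - 1) * Q * (2 * x) * (2 * x)))
        + s ^ 2 / 2 * (ε * (P * 2)) := by ring
  have hterm1 : ε * (P * (2 * x)) * t = ε * P * (2 * x) * t := by ring
  rw [hexpand, hterm1]
  linarith [key, hA, hB]
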